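/- Let ε ∈ [0,1) and let k ≥ 1 be an integer. Fix (δ₁,…,δ_{k−1}) ∈ [0,1]^{k−1} and let N(δ₀) and D(δ₀) denote the numerator and denominator of R_ε as functions of δ₀ with the other coordinates fixed, and let N′, D′ denote their derivatives in δ₀. Then the function δ₀ ↦ N′(δ₀)·D(δ₀) − N(δ₀)·D′(δ₀) is strictly decreasing on the open interval (0,1); consequently ∂R_ε/∂δ₀ changes sign at most once on (0,1), from positive to negative. -/

import Mathlib

/-- The binary entropy function (base 2), with `H2 0 = H2 1 = 0`. -/
noncomputable def H2 (x : ℝ) : ℝ := -(x * Real.logb 2 x) - (1 - x) * Real.logb 2 (1 - x)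

/-- Numerator `N(δ₀,…,δ_{k−1}) = Σ_{i=0}^{k−1} ε̄^{i+1}·H₂(δ_i)·Π_{m=0}^{i−1} δ_m`. -/
noncomputable def Nnum (ε : ℝ) (k : ℕ) (δ : ℕ → ℝ) : ℝ :=
  ∑ i ∈ Finset.range k, (1 - ε) ^ (i + 1) * H2 (δ i) * ∏ m ∈ Finset.range i, δ m

/-- Denominator `D(δ₀,…,δ_{k−1}) = 1 + Σ_{i=0}^{k−1} ε̄^{i+1}·Π_{m=0}^{i} δ_m`. -/
noncomputable def Dden (ε : ℝ) (k : ℕ) (δ : ℕ → ℝ) : ℝ :=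
  1 + ∑ i ∈ Finset.range k, (1 - ε) ^ (i + 1) * ∏ m ∈ Finset.range (i + 1), δ m

/-- `R_ε = N/D`. -/
noncomputable def Rfun (ε : ℝ) (k : ℕ) (δ : ℕ → ℝ) : ℝ :=
  Nnum ε k δ / Dden ε k δ

lemma H2_eq_binEntropy : H2 = fun x => Real.binEntropy x / Real.log 2 := by
  funext x
  simp only [H2, Real.binEntropy, Real.logb, Real.log_inv]
  ring

lemma H2_nonneg {x : ℝ} (h0 : 0 ≤ x) (h1 : x ≤ 1) : 0 ≤ H2 x := by
  rw [H2_eq_binEntropy]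
  exact div_nonneg (Real.binEntropy_nonneg h0 h1) (Real.log_nonneg (by norm_num))

lemma hasDerivAt_H2 {t : ℝ} (h0 : t ≠ 0) (h1 : t ≠ 1) :
    HasDerivAt H2 (Real.logb 2 (1 - t) - Real.logb 2 t) t := by
  rw [H2_eq_binEntropy]
  have := (Real.hasDerivAt_binEntropy h0 h1).div_const (Real.log 2)
  simpa [Real.logb, sub_div] using this

/-- Let `ε ∈ [0,1)`, `k ≥ 1`, and fix `(δ₁,…,δ_{k−1}) ∈ [0,1]^{k−1}`.  Viewing `N`, `D`
as functions of `δ₀` (with derivatives `N′`, `D′` in `δ₀`), the function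
`δ₀ ↦ N′(δ₀)·D(δ₀) − N(δ₀)·D′(δ₀)` is strictly decreasing on `(0,1)`; consequently
`∂R_ε/∂δ₀` changes sign at most once on `(0,1)`, from positive to negative. -/
theorem first_partial_numerator_strictAnti
    (ε : ℝ) (hε : ε ∈ Set.Ico (0 : ℝ) 1) (k : ℕ) (hk : 1 ≤ k)
    (δ : ℕ → ℝ) (hδ : ∀ i, 1 ≤ i → i < k → δ i ∈ Set.Icc (0 : ℝ) 1) :
    StrictAntiOn (fun t : ℝ =>
        deriv (fun s : ℝ => Nnum ε k (Function.update δ 0 s)) t *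
          Dden ε k (Function.update δ 0 t) -
        Nnum ε k (Function.update δ 0 t) *
          deriv (fun s : ℝ => Dden ε k (Function.update δ 0 s)) t)
      (Set.Ioo (0 : ℝ) 1) ∧
    ∀ a ∈ Set.Ioo (0 : ℝ) 1, ∀ b ∈ Set.Ioo (0 : ℝ) 1, a < b →
      deriv (fun s : ℝ => Rfun ε k (Function.update δ 0 s)) a ≤ 0 →
      deriv (fun s : ℝ => Rfun ε k (Function.update δ 0 s)) b < 0 := by
  obtain ⟨hε0, hε1⟩ := hε
  set c : ℝ := 1 - ε with hc
  have hcpos : 0 < c := by simp [hc]; linarith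
  set A : ℝ := ∑ i ∈ Finset.Ico 1 k,
      c ^ (i + 1) * H2 (δ i) * ∏ m ∈ Finset.Ico 1 i, δ m with hA
  set B : ℝ := ∑ i ∈ Finset.range k,
      c ^ (i + 1) * ∏ m ∈ Finset.Ico 1 (i + 1), δ m with hB
  -- N in terms of A
  have hN : ∀ s : ℝ, Nnum ε k (Function.update δ 0 s) = c * H2 s + s * A := by
    intro s
    rw [Nnum, Finset.sum_range_eq_add_Ico _ hk]
    have h0 : c ^ (0 + 1) * H2 (Function.update δ 0 s 0) *
        ∏ m ∈ Finset.range 0, Function.update δ 0 s m = c * H2 s := by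
      simp
    rw [h0, hA, Finset.mul_sum]
    congr 1
    apply Finset.sum_congr rfl
    intro i hi
    obtain ⟨hi1, hik⟩ := Finset.mem_Ico.mp hi
    have hδi : Function.update δ 0 s i = δ i := Function.update_of_ne (by omega) _ _
    have hprod : ∏ m ∈ Finset.range i, Function.update δ 0 s m =
        s * ∏ m ∈ Finset.Ico 1 i, δ m := by
      rw [Finset.prod_range_eq_mul_Ico _ hi1, Function.update_self]
      congr 1
      exact Finset.prod_congr rfl fun m hm =>
        Function.update_of_ne (by have := (Finset.mem_Ico.mp hm).1; omega) _ _
    rw [hδi, hprod]; ring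
  -- D in terms of B
  have hD : ∀ s : ℝ, Dden ε k (Function.update δ 0 s) = 1 + s * B := by
    intro s
    rw [Dden, hB, Finset.mul_sum]
    congr 1
    apply Finset.sum_congr rfl
    intro i _
    have hprod : ∏ m ∈ Finset.range (i + 1), Function.update δ 0 s m =
        s * ∏ m ∈ Finset.Ico 1 (i + 1), δ m := by
      rw [Finset.prod_range_eq_mul_Ico _ (Nat.succ_pos i), Function.update_self]
      congr 1
      exact Finset.prod_congr rfl fun m hm =>
        Function.update_of_ne (by have := (Finset.mem_Ico.mp hm).1; omega) _ _
    rw [hprod]; ring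
  have hBnn : 0 ≤ B := by
    apply Finset.sum_nonneg
    intro i hi
    apply mul_nonneg (pow_nonneg hcpos.le _)
    apply Finset.prod_nonneg
    intro m hm
    obtain ⟨hm1, hm2⟩ := Finset.mem_Ico.mp hm
    exact (hδ m hm1 (lt_of_lt_of_le hm2 (Nat.succ_le_of_lt (Finset.mem_range.mp hi)))).1
  -- the key function G
  set G : ℝ → ℝ := fun t => c * ((1 + B) * Real.logb 2 (1 - t) - Real.logb 2 t) + A with hG
  -- derivative facts on (0,1)
  have hNfun : (fun s : ℝ => Nnum ε k (Function.update δ 0 s)) =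
      fun s => c * H2 s + s * A := funext hN
  have hDfun : (fun s : ℝ => Dden ε k (Function.update δ 0 s)) =
      fun s => 1 + s * B := funext hD
  have hNder : ∀ t ∈ Set.Ioo (0 : ℝ) 1,
      HasDerivAt (fun s : ℝ => Nnum ε k (Function.update δ 0 s))
        (c * (Real.logb 2 (1 - t) - Real.logb 2 t) + A) t := by
    intro t ht
    rw [hNfun]
    exact ((hasDerivAt_H2 ht.1.ne' (by linarith [ht.2])).const_mul c).add
      (hasDerivAt_mul_const A)
  have hDder : ∀ t : ℝ,
      HasDerivAt (fun s : ℝ => Dden ε k (Function.update δ 0 s)) B t := by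
    intro t
    rw [hDfun]
    exact (hasDerivAt_mul_const B).const_add 1
  -- target equals G on Ioo 0 1
  have hEq : ∀ t ∈ Set.Ioo (0 : ℝ) 1,
      deriv (fun s : ℝ => Nnum ε k (Function.update δ 0 s)) t *
          Dden ε k (Function.update δ 0 t) -
        Nnum ε k (Function.update δ 0 t) *
          deriv (fun s : ℝ => Dden ε k (Function.update δ 0 s)) t = G t := by
    intro t ht
    rw [(hNder t ht).deriv, (hDder t).deriv, hN t, hD t, hG]
    simp only [H2, Real.logb]
    ring
  -- G is strictly decreasing on (0,1)
  have hGanti : StrictAntiOn G (Set.Ioo (0 : ℝ) 1) := by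
    intro a ha b hb hab
    have h1 : Real.logb 2 (1 - b) < Real.logb 2 (1 - a) :=
      Real.logb_lt_logb (by norm_num) (by linarith [hb.2]) (by linarith)
    have h2 : Real.logb 2 a < Real.logb 2 b :=
      Real.logb_lt_logb (by norm_num) ha.1 hab
    have hBB : (0 : ℝ) < 1 + B := by linarith
    have key : (1 + B) * Real.logb 2 (1 - b) - Real.logb 2 b <
        (1 + B) * Real.logb 2 (1 - a) - Real.logb 2 a := by
      have := mul_lt_mul_of_pos_left h1 hBB
      linarith
    simp only [hG]
    have := mul_lt_mul_of_pos_left key hcpos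
    linarith
  constructor
  · intro a ha b hb hab
    simp only [hEq a ha, hEq b hb]
    exact hGanti ha hb hab
  · -- second part
    have hRderiv : ∀ t ∈ Set.Ioo (0 : ℝ) 1,
        deriv (fun s : ℝ => Rfun ε k (Function.update δ 0 s)) t =
          G t / (1 + t * B) ^ 2 := by
      intro t ht
      have hDpos : (0 : ℝ) < 1 + t * B := by
        have : 0 ≤ t * B := mul_nonneg ht.1.le hBnn
        linarith
      have hRfun : (fun s : ℝ => Rfun ε k (Function.update δ 0 s)) =
          fun s => (c * H2 s + s * A) / (1 + s * B) := by
        funext s; rw [Rfun, hN s, hD s]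
      have hNd : HasDerivAt (fun s : ℝ => c * H2 s + s * A)
          (c * (Real.logb 2 (1 - t) - Real.logb 2 t) + A) t := by
        have := hNder t ht; rwa [hNfun] at this
      have hDd : HasDerivAt (fun s : ℝ => 1 + s * B) B t := by
        have := hDder t; rwa [hDfun] at this
      have hdiv := hNd.div hDd hDpos.ne'
      rw [hRfun, show (fun s : ℝ => (c * H2 s + s * A) / (1 + s * B)) =
          (fun s : ℝ => c * H2 s + s * A) / (fun s : ℝ => 1 + s * B) from rfl, hdiv.deriv]
      rw [hG]
      simp only [H2, Real.logb]
      ring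
    intro a ha b hb hab hRa
    have hDposa : (0 : ℝ) < 1 + a * B := by
      have : 0 ≤ a * B := mul_nonneg ha.1.le hBnn
      linarith
    have hDposb : (0 : ℝ) < 1 + b * B := by
      have : 0 ≤ b * B := mul_nonneg hb.1.le hBnn
      linarith
    rw [hRderiv a ha] at hRa
    have hGa : G a ≤ 0 := by
      by_contra h
      push_neg at h
      have : 0 < G a / (1 + a * B) ^ 2 := div_pos h (by positivity)
      linarith
    have hGb : G b < 0 := lt_of_lt_of_le (hGanti ha hb hab) hGa
    rw [hRderiv b hb]
    exact div_neg_of_neg_of_pos hGb (by positivity)
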